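/- Every quasi-pure entanglement breaking completely positive map φ : M_{d1}(ℂ) → M_{d2}(ℂ) is of the form φ(X) = trace(ρX)·|v⟩⟨v| for some positive semidefinite matrix ρ ∈ M_{d1}(ℂ) and some unit vector v ∈ ℂ^{d2}. -/

import Mathlib

set_option linter.unusedSectionVars false

open Matrix
open scoped InnerProductSpace ComplexOrder

namespace QPaux

variable {m n : Type*} [Fintype m] [Fintype n]

theorem rank_one_decomp [DecidableEq n] (L : Matrix m n ℂ) (h : L.rank = 1) :
    ∃ (a : m → ℂ) (w : n → ℂ), a ≠ 0 ∧ w ≠ 0 ∧ L = vecMulVec a w := by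
  have h' := h
  rw [Matrix.rank, finrank_eq_one_iff'] at h'
  obtain ⟨⟨v, hvmem⟩, hv0, hv⟩ := h'
  choose c hc using fun s : n => hv ⟨L *ᵥ Pi.single s 1, LinearMap.mem_range.2 ⟨Pi.single s 1, rfl⟩⟩
  have hL : L = vecMulVec v c := by
    ext i s
    have h2 := congrFun (congrArg Subtype.val (hc s)) i
    simp [mulVec_single, vecMulVec_apply] at h2 ⊢
    rw [← h2]; ring
  refine ⟨v, c, by simpa [Subtype.ext_iff] using hv0, ?_, hL⟩
  rintro rfl
  have hz : L = 0 := by rw [hL]; ext i s; simp [vecMulVec_apply]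
  rw [hz, Matrix.rank_zero] at h
  exact one_ne_zero h.symm

lemma vecMulVec_mulVec' (a : m → ℂ) (w : n → ℂ) (h : n → ℂ) :
    vecMulVec a w *ᵥ h = (w ⬝ᵥ h) • a := by
  ext i
  simp only [mulVec, vecMulVec_apply, dotProduct, Pi.smul_apply, smul_eq_mul, Finset.sum_mul]
  exact Finset.sum_congr rfl fun _ _ => by ring

lemma conjTranspose_vecMulVec (a : m → ℂ) (w : n → ℂ) :
    (vecMulVec a w)ᴴ = vecMulVec (star w) (star a) := by
  ext i j
  simp [conjTranspose_apply, vecMulVec_apply, mul_comm]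

lemma star_dotProduct_mulVec_conjTranspose (a : m → ℂ) (X : Matrix m m ℂ) (z : m → ℂ) :
    star a ⬝ᵥ (Xᴴ *ᵥ z) = star (X *ᵥ a) ⬝ᵥ z := by
  rw [dotProduct_mulVec, ← star_mulVec]

lemma termlemma (a : m → ℂ) (wv hq h'q : n → ℂ) (X Y : Matrix m m ℂ) :
    star hq ⬝ᵥ (((vecMulVec a wv)ᴴ * (Xᴴ * Y) * vecMulVec a wv) *ᵥ h'q)
      = (starRingEnd ℂ) (wv ⬝ᵥ hq) * ((wv ⬝ᵥ h'q) * (star (X *ᵥ a) ⬝ᵥ (Y *ᵥ a))) := by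
  rw [← mulVec_mulVec, vecMulVec_mulVec', mulVec_smul, dotProduct_smul,
    ← mulVec_mulVec, conjTranspose_vecMulVec, vecMulVec_mulVec', dotProduct_smul,
    star_dotProduct_star, ← mulVec_mulVec, star_dotProduct_mulVec_conjTranspose]
  simp only [smul_eq_mul]
  ring_nf
  rfl

lemma sum_mulVec' {k : ℕ} (M : Fin k → Matrix m n ℂ) (x : n → ℂ) :
    (∑ j, M j) *ᵥ x = ∑ j, M j *ᵥ x := by
  ext i
  simp only [mulVec, dotProduct, Matrix.sum_apply, Finset.sum_mul, Finset.sum_apply]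
  rw [Finset.sum_comm]

lemma dotProduct_sum' {k : ℕ} (u : m → ℂ) (f : Fin k → m → ℂ) :
    u ⬝ᵥ (∑ j, f j) = ∑ j, u ⬝ᵥ f j := by
  simp only [dotProduct, Finset.sum_apply, Finset.mul_sum]
  rw [Finset.sum_comm]

lemma trace_vecMulVec_mul (p : m → ℂ) (X : Matrix m m ℂ) :
    (vecMulVec p (star p) * X).trace = star p ⬝ᵥ (X *ᵥ p) := by
  simp only [Matrix.trace, Matrix.diag, Matrix.mul_apply, vecMulVec_apply, dotProduct, mulVec,
    dotProduct, Pi.star_apply, Finset.mul_sum]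
  rw [Finset.sum_comm]
  exact Finset.sum_congr rfl fun i _ => Finset.sum_congr rfl fun s _ => by ring

lemma posSemidef_vecMulVec_star (p : m → ℂ) [DecidableEq m] :
    (vecMulVec p (star p)).PosSemidef := by
  have : vecMulVec p (star p) = (Matrix.replicateRow Unit (star p))ᴴ * Matrix.replicateRow Unit (star p) := by
    ext i j
    simp [vecMulVec_apply, Matrix.mul_apply, Matrix.replicateRow_apply, conjTranspose_apply]
  rw [this]
  exact posSemidef_conjTranspose_mul_self _


lemma conjTranspose_mul_mul_vecMulVec_apply (a : m → ℂ) (w : n → ℂ) (X : Matrix m m ℂ)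
    (s t : n) :
    ((vecMulVec a w)ᴴ * X * vecMulVec a w) s t
      = (starRingEnd ℂ) (w s) * (w t * (star a ⬝ᵥ (X *ᵥ a))) := by
  simp only [Matrix.mul_apply, conjTranspose_apply, vecMulVec_apply, dotProduct, mulVec,
    Pi.star_apply, star_mul', Finset.sum_mul, Finset.mul_sum]
  rw [Finset.sum_comm]
  exact Finset.sum_congr rfl fun i _ => Finset.sum_congr rfl fun i' _ => by
    simp only [RCLike.star_def]; ring

lemma posSemidef_sum_vecMulVec {k : ℕ} [DecidableEq m] (p : Fin k → m → ℂ) :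
    (∑ j, vecMulVec (p j) (star (p j))).PosSemidef := by
  classical
  refine Finset.sum_induction _ _ (fun A B hA hB => hA.add hB) Matrix.PosSemidef.zero
    fun j _ => posSemidef_vecMulVec_star (p j)

end QPaux



noncomputable section

open scoped ComplexOrder

/-- A linear map between star algebras is *completely positive* if, at every matrix
level `n`, it maps positive matrices (those of the form `Nᴴ * N`) to positive matrices. -/
def IsCPMap {A B : Type*} [Ring A] [StarRing A] [Module ℂ A]
    [Ring B] [StarRing B] [Module ℂ B] (φ : A →ₗ[ℂ] B) : Prop :=
  ∀ (n : ℕ) (M : Matrix (Fin n) (Fin n) A),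
    (∃ N : Matrix (Fin n) (Fin n) A, M = N.conjTranspose * N) →
    ∃ P : Matrix (Fin n) (Fin n) B, M.map φ = P.conjTranspose * P

/-- A bundled Hilbert space over `ℂ`. -/
structure HilbertSpc : Type 1 where
  carrier : Type
  [ng : NormedAddCommGroup carrier]
  [ip : InnerProductSpace ℂ carrier]
  [cs : CompleteSpace carrier]

attribute [instance] HilbertSpc.ng HilbertSpc.ip HilbertSpc.cs

/-- A completely positive map `φ : A → B(H)` is *quasi-pure* if it has a minimal
Stinespring triple `(K, π, V)` (i.e. `φ(X) = V* π(X) V` and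
`K = closed span {π(X)Vh}`) such that every non-zero vector in the range of `V`
is cyclic for the representation `π`. -/
def IsQuasiPure {A : Type*} [Ring A] [StarRing A] [Algebra ℂ A]
    {H : Type} [NormedAddCommGroup H] [InnerProductSpace ℂ H] [CompleteSpace H]
    (φ : A →ₗ[ℂ] (H →L[ℂ] H)) : Prop :=
  ∃ (K : HilbertSpc) (π : A →⋆ₐ[ℂ] (K.carrier →L[ℂ] K.carrier)) (V : H →L[ℂ] K.carrier),
    (∀ X : A, φ X = (ContinuousLinearMap.adjoint V).comp ((π X).comp V)) ∧
    (Submodule.span ℂ {k : K.carrier | ∃ (X : A) (h : H), k = π X (V h)}).topologicalClosure = ⊤ ∧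
    ∀ h : H, V h ≠ 0 →
      (Submodule.span ℂ {k : K.carrier | ∃ X : A, k = π X (V h)}).topologicalClosure = ⊤

/-- The star algebra isomorphism `M_d(ℂ) ≅ B(ℂ^d)`, as a linear map. -/
noncomputable def matCLM (d : ℕ) :
    Matrix (Fin d) (Fin d) ℂ →ₗ[ℂ] (EuclideanSpace ℂ (Fin d) →L[ℂ] EuclideanSpace ℂ (Fin d)) where
  toFun M := Matrix.toEuclideanCLM (𝕜 := ℂ) M
  map_add' x y := by simp
  map_smul' c x := by simp

/-- Quasi-purity for a completely positive map between matrix algebras, via the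
identification `M_{d₂}(ℂ) ≅ B(ℂ^{d₂})`. -/
noncomputable def IsQuasiPureMat {d₁ d₂ : ℕ}
    (φ : Matrix (Fin d₁) (Fin d₁) ℂ →ₗ[ℂ] Matrix (Fin d₂) (Fin d₂) ℂ) : Prop :=
  IsQuasiPure ((matCLM d₂).comp φ)

/-- A completely positive map between matrix algebras is *entanglement breaking* if it
admits a (not necessarily minimal) Choi–Kraus decomposition `φ(X) = ∑ⱼ Lⱼ* X Lⱼ` in which
every `Lⱼ` has rank one. -/
def IsEntanglementBreaking {d₁ d₂ : ℕ}
    (φ : Matrix (Fin d₁) (Fin d₁) ℂ →ₗ[ℂ] Matrix (Fin d₂) (Fin d₂) ℂ) : Prop :=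
  ∃ (k : ℕ) (L : Fin k → Matrix (Fin d₁) (Fin d₂) ℂ),
    (∀ j, (L j).rank = 1) ∧ ∀ X, φ X = ∑ j, (L j).conjTranspose * X * L j

/-- **Theorem.** Every quasi-pure entanglement breaking completely positive map
`φ : M_{d₁}(ℂ) → M_{d₂}(ℂ)` has the form `φ(X) = trace(ρX) · |v⟩⟨v|` for some positive
semidefinite `ρ ∈ M_{d₁}(ℂ)` and some unit vector `v ∈ ℂ^{d₂}`. -/
theorem isQuasiPure_entanglementBreaking_form
    {d₁ d₂ : ℕ} (hd₂ : 0 < d₂)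
    (φ : Matrix (Fin d₁) (Fin d₁) ℂ →ₗ[ℂ] Matrix (Fin d₂) (Fin d₂) ℂ)
    (hφ : IsCPMap φ) (hqp : IsQuasiPureMat φ) (hEB : IsEntanglementBreaking φ) :
    ∃ (ρ : Matrix (Fin d₁) (Fin d₁) ℂ) (v : EuclideanSpace ℂ (Fin d₂)),
      ρ.PosSemidef ∧ ‖v‖ = 1 ∧
      ∀ X, φ X = (ρ * X).trace •
        Matrix.vecMulVec (fun i => v i) (fun j => star (v j)) := by
  classical
  obtain ⟨k, L, hLrank, hLdec⟩ := hEB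
  choose a wv ha0 hw0 hLj using fun j => QPaux.rank_one_decomp (L j) (hLrank j)
  unfold IsQuasiPureMat IsQuasiPure at hqp
  obtain ⟨K, π, V, hst, -, hcyc⟩ := hqp
  set E := EuclideanSpace ℂ (Fin d₂)
  -- the functionals γ j
  set γ : Fin k → E → ℂ := fun j h => wv j ⬝ᵥ (WithLp.equiv 2 (Fin d₂ → ℂ)) h with hγ
  -- the comparison vectors Φ
  set Φ : Matrix (Fin d₁) (Fin d₁) ℂ → E → EuclideanSpace ℂ (Fin k × Fin d₁) :=
    fun X h => (WithLp.equiv 2 (Fin k × Fin d₁ → ℂ)).symm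
      (fun p => γ p.1 h * (X *ᵥ a p.1) p.2) with hΦ
  -- Gram identity
  have hGram : ∀ (X Y : Matrix (Fin d₁) (Fin d₁) ℂ) (h h' : E),
      ⟪π X (V h), π Y (V h')⟫_ℂ = ⟪Φ X h, Φ Y h'⟫_ℂ := by
    intro X Y h h'
    have hπadj : ∀ Z : Matrix (Fin d₁) (Fin d₁) ℂ,
        π (Zᴴ) = ContinuousLinearMap.adjoint (π Z) := fun Z => by
      rw [← ContinuousLinearMap.star_eq_adjoint, ← map_star]
      rfl
    have h1 : ⟪π X (V h), π Y (V h')⟫_ℂ = ⟪V h, π (Xᴴ * Y) (V h')⟫_ℂ := by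
      rw [_root_.map_mul, ContinuousLinearMap.mul_apply, hπadj,
        ContinuousLinearMap.adjoint_inner_right]
    have h2 : Matrix.toEuclideanCLM (𝕜 := ℂ) (φ (Xᴴ * Y)) h'
        = (ContinuousLinearMap.adjoint V) (π (Xᴴ * Y) (V h')) := by
      have := congrFun (congrArg DFunLike.coe (hst (Xᴴ * Y))) h'
      exact this
    have h3 : ⟪V h, π (Xᴴ * Y) (V h')⟫_ℂ
        = ⟪h, Matrix.toEuclideanCLM (𝕜 := ℂ) (φ (Xᴴ * Y)) h'⟫_ℂ := by
      rw [h2, ContinuousLinearMap.adjoint_inner_right]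
    rw [h1, h3, EuclideanSpace.inner_eq_star_dotProduct, Matrix.ofLp_toEuclideanCLM]
    have hL : star ((WithLp.equiv 2 (Fin d₂ → ℂ)) h) ⬝ᵥ
          ((φ (Xᴴ * Y)) *ᵥ (WithLp.equiv 2 (Fin d₂ → ℂ)) h')
        = ∑ j, (starRingEnd ℂ) (γ j h) *
            (γ j h' * (star (X *ᵥ a j) ⬝ᵥ (Y *ᵥ a j))) := by
      rw [hLdec, QPaux.sum_mulVec', QPaux.dotProduct_sum']
      exact Finset.sum_congr rfl fun j _ => by rw [hLj j]; exact QPaux.termlemma _ _ _ _ _ _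
    rw [dotProduct_comm]; refine hL.trans ?_
    rw [hΦ]
    simp only [WithLp.equiv_symm_apply, EuclideanSpace.inner_toLp_toLp]
    simp only [dotProduct, Pi.star_apply, RCLike.star_def]
    rw [Fintype.sum_prod_type]
    refine Finset.sum_congr rfl fun j _ => ?_
    simp only [_root_.map_mul, dotProduct, Pi.star_apply, RCLike.star_def, Finset.mul_sum]
    exact Finset.sum_congr rfl fun i _ => by ring

  -- Fact A
  have hKey : ∀ h : E, (∃ j, γ j h ≠ 0) → ∀ (Y : Matrix (Fin d₁) (Fin d₁) ℂ) (h' : E),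
      ∃ X₀, Φ Y h' = Φ X₀ h := by
    intro h hh Y h'
    have hVh : V h ≠ 0 := by
      intro hV0
      have h0 : ⟪Φ 1 h, Φ 1 h⟫_ℂ = 0 := by
        rw [← hGram 1 1 h h, hV0]
        simp
      have hΦ0 : Φ 1 h = 0 := inner_self_eq_zero.mp h0
      obtain ⟨j, hj⟩ := hh
      obtain ⟨i, hi⟩ : ∃ i, a j i ≠ 0 := by
        by_contra hno; push_neg at hno; exact ha0 j (funext hno)
      have hcomp := congrFun (congrArg (WithLp.equiv 2 (Fin k × Fin d₁ → ℂ)) hΦ0) (j, i)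
      rw [hΦ] at hcomp
      simp only [Equiv.apply_symm_apply, one_mulVec] at hcomp
      rcases mul_eq_zero.mp hcomp with hc | hc
      · exact hj hc
      · exact hi hc
    let T : Matrix (Fin d₁) (Fin d₁) ℂ →ₗ[ℂ] K.carrier :=
      { toFun := fun X => π X (V h)
        map_add' := fun X Y => by simp only [_root_.map_add]; rfl
        map_smul' := fun c X => by simp only [_root_.map_smul]; rfl }
    have hrange : {kk : K.carrier | ∃ X, kk = π X (V h)} = ↑(LinearMap.range T) := by
      ext z
      simp only [Set.mem_setOf_eq, SetLike.mem_coe, LinearMap.mem_range]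
      exact ⟨fun ⟨X, hX⟩ => ⟨X, hX.symm⟩, fun ⟨X, hX⟩ => ⟨X, hX.symm⟩⟩
    have hspan := hcyc h hVh
    rw [hrange, Submodule.span_eq,
      (LinearMap.range T).closed_of_finiteDimensional.submodule_topologicalClosure_eq] at hspan
    have hmem : π Y (V h') ∈ LinearMap.range T := hspan ▸ Submodule.mem_top
    obtain ⟨X₀, hX₀⟩ := hmem
    have hX₀' : π X₀ (V h) = π Y (V h') := hX₀
    refine ⟨X₀, ?_⟩
    have hz : ⟪Φ Y h' - Φ X₀ h, Φ Y h' - Φ X₀ h⟫_ℂ = 0 := by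
      rw [inner_sub_left, inner_sub_right, inner_sub_right, ← hGram Y Y h' h',
        ← hGram Y X₀ h' h, ← hGram X₀ Y h h', ← hGram X₀ X₀ h h, ← hX₀']
      ring
    exact sub_eq_zero.mp (inner_self_eq_zero.mp hz)

  rcases Nat.eq_zero_or_pos k with hk | hk
  · subst hk
    refine ⟨0, EuclideanSpace.single ⟨0, hd₂⟩ 1, Matrix.PosSemidef.zero, ?_, ?_⟩
    · simp [EuclideanSpace.norm_single]
    · intro X
      rw [hLdec]
      simp
  · have hj₀ : (0 : ℕ) < k := hk
    set j₀ : Fin k := ⟨0, hj₀⟩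
    set x : Fin k → E := fun j => (WithLp.equiv 2 (Fin d₂ → ℂ)).symm (star (wv j)) with hxdef
    have hγx : ∀ (j : Fin k) (h : E), γ j h = ⟪x j, h⟫_ℂ := by
      intro j h
      rw [EuclideanSpace.inner_eq_star_dotProduct, hxdef]
      simp [hγ]
      exact dotProduct_comm _ _
    have hx0 : ∀ j, x j ≠ 0 := by
      intro j hj
      apply hw0 j
      have : star (wv j) = (0 : Fin d₂ → ℂ) := by
        simpa [hxdef] using congrArg (WithLp.equiv 2 (Fin d₂ → ℂ)) hj
      have := congrArg star this
      simpa using this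
    have hai : ∀ j : Fin k, ∃ i, a j i ≠ 0 := by
      intro j
      by_contra hno; push_neg at hno; exact ha0 j (funext hno)
    -- all x j are parallel to x j₀
    have hpar : ∀ j, ∃ c : ℂ, x j = c • x j₀ := by
      intro j
      have hxy : ∀ h : E, ⟪x j₀, h⟫_ℂ = 0 → ⟪x j, h⟫_ℂ = 0 := by
        intro h h0
        by_contra hne
        obtain ⟨X₀, hX₀⟩ := hKey h ⟨j, by rw [hγx]; exact hne⟩ 1 (x j₀)
        obtain ⟨i, hi⟩ := hai j₀
        have hcomp := congrFun (congrArg (WithLp.equiv 2 (Fin k × Fin d₁ → ℂ)) hX₀) (j₀, i)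
        rw [hΦ] at hcomp
        simp only [Equiv.apply_symm_apply, one_mulVec] at hcomp
        rw [hγx j₀ (x j₀), hγx j₀ h, h0, zero_mul] at hcomp
        have hxx : ⟪x j₀, x j₀⟫_ℂ ≠ 0 := inner_self_ne_zero.mpr (hx0 j₀)
        exact hi (by
          rcases mul_eq_zero.mp hcomp with hc | hc
          · exact absurd hc hxx
          · exact hc)
      have hmem : x j ∈ (ℂ ∙ x j₀) := by
        rw [← Submodule.orthogonal_orthogonal (ℂ ∙ x j₀)]
        intro u hu
        have h0 : ⟪x j₀, u⟫_ℂ = 0 :=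
          Submodule.mem_orthogonal_singleton_iff_inner_right.mp hu
        have := hxy u h0
        rw [← inner_conj_symm] at this
        simpa using congrArg (starRingEnd ℂ) this
      obtain ⟨c, hc⟩ := Submodule.mem_span_singleton.mp hmem
      exact ⟨c, hc.symm⟩
    choose c hc using hpar
    -- translate to the plain vectors
    have hwj : ∀ j, wv j = (starRingEnd ℂ) (c j) • wv j₀ := by
      intro j
      have h1 := congrArg (WithLp.equiv 2 (Fin d₂ → ℂ)) (hc j)
      rw [show (WithLp.equiv 2 (Fin d₂ → ℂ)) (c j • x j₀) = c j • (WithLp.equiv 2 (Fin d₂ → ℂ)) (x j₀) from rfl] at h1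
      simp only [hxdef, Equiv.apply_symm_apply] at h1
      have h2 := congrArg star h1
      rw [star_smul, star_star, star_star] at h2
      exact h2
    set u : Fin d₂ → ℂ := wv j₀ with hu
    set x₀ : E := x j₀ with hx₀
    set nn : ℝ := ‖x₀‖ with hnn
    have hnn0 : 0 < nn := norm_pos_iff.mpr (hx0 j₀)
    set v : E := ((nn : ℂ))⁻¹ • x₀ with hv
    have hvnorm : ‖v‖ = 1 := by
      rw [hv, norm_smul]
      simp only [norm_inv, Complex.norm_real, Real.norm_eq_abs, abs_of_pos hnn0]
      field_simp
      exact hnn.symm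
    have hNc : (u ⬝ᵥ star u) = ((nn : ℝ) : ℂ) ^ 2 := by
      have h1 : ⟪x₀, x₀⟫_ℂ = ((‖x₀‖ : ℝ) : ℂ) ^ 2 := inner_self_eq_norm_sq_to_K x₀
      rw [EuclideanSpace.inner_eq_star_dotProduct] at h1
      simp only [hx₀, hxdef, Equiv.apply_symm_apply, WithLp.equiv_symm_apply, WithLp.ofLp_toLp, star_star] at h1
      rw [dotProduct_comm]; exact h1
    set ρ : Matrix (Fin d₁) (Fin d₁) ℂ :=
      ∑ j, vecMulVec ((((nn : ℝ) : ℂ) * c j) • a j) (star ((((nn : ℝ) : ℂ) * c j) • a j)) with hρ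
    refine ⟨ρ, v, QPaux.posSemidef_sum_vecMulVec _, hvnorm, ?_⟩
    intro X
    have htr : (ρ * X).trace
        = ∑ j, (((nn : ℝ) : ℂ) ^ 2 * (c j * (starRingEnd ℂ) (c j)))
            * (star (a j) ⬝ᵥ (X *ᵥ a j)) := by
      rw [hρ, Finset.sum_mul, Matrix.trace_sum]
      refine Finset.sum_congr rfl fun j _ => ?_
      rw [QPaux.trace_vecMulVec_mul]
      rw [mulVec_smul, star_smul, smul_dotProduct, dotProduct_smul]
      simp only [smul_eq_mul, star_mul', RCLike.star_def, Complex.conj_ofReal]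
      ring
    rw [hLdec, htr]
    ext s t
    rw [Matrix.sum_apply]
    have hentry : ∀ j, ((L j)ᴴ * X * L j) s t
        = (c j * (starRingEnd ℂ) (c j)) * ((starRingEnd ℂ) (u s) * (u t
            * (star (a j) ⬝ᵥ (X *ᵥ a j)))) := by
      intro j
      rw [hLj j, QPaux.conjTranspose_mul_mul_vecMulVec_apply, hwj j]
      simp only [Pi.smul_apply, smul_eq_mul, _root_.map_mul, RCLike.star_def, Complex.conj_conj]
      ring
    simp only [hentry]
    have hvs : ∀ i, v i = ((nn : ℝ) : ℂ)⁻¹ * (starRingEnd ℂ) (u i) := fun i => rfl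
    simp only [Matrix.smul_apply, vecMulVec_apply, hvs, RCLike.star_def, _root_.map_mul, map_inv₀,
      Complex.conj_conj, Complex.conj_ofReal, smul_eq_mul, Finset.sum_mul]
    have hnnc : ((nn : ℝ) : ℂ) ≠ 0 := by
      simpa using hnn0.ne'
    refine Finset.sum_congr rfl fun j _ => ?_
    field_simp
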